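/- Let d ≥ 1. There exists a constant C = C(d) > 0 such that for every r > 0, every i ∈ {1,…,d}, and all x, y, z ∈ ℝ^d with |x−z| > 2|x−y|, the second derivatives of the Gaussian heat kernel satisfy |∂^2_{x_i} K(r, x−z) − ∂^2_{x_i} K(r, y−z)| ≤ C |x−y| r^{-(d+3)/2} e^{-|x−z|^2/(16 r)}. -/

import Mathlib

open MeasureTheory Real

/-- The `d`-dimensional Gaussian heat kernel `K(r,x) = (2πr)^{-d/2} exp(-|x|²/(2r))`. -/
noncomputable def heatKernel (d : ℕ) (r : ℝ) (x : EuclideanSpace ℝ (Fin d)) : ℝ :=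
  (2 * Real.pi * r) ^ (-(d : ℝ) / 2) * Real.exp (-‖x‖ ^ 2 / (2 * r))

section Aux

lemma hk_hasFDerivAt (d : ℕ) (r : ℝ) (w : EuclideanSpace ℝ (Fin d)) :
    HasFDerivAt (heatKernel d r) ((heatKernel d r w * (-(1/r))) • (innerSL ℝ w)) w := by
  have h1 : HasFDerivAt (fun x : EuclideanSpace ℝ (Fin d) => ‖x‖ ^ 2) (2 • (innerSL ℝ w)) w :=
    (hasStrictFDerivAt_norm_sq w).hasFDerivAt
  have h2 := ((h1.const_mul (-(1/(2*r)))).exp).const_mul ((2 * Real.pi * r) ^ (-(d : ℝ) / 2))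
  have heq : heatKernel d r = fun x : EuclideanSpace ℝ (Fin d) =>
      (2 * Real.pi * r) ^ (-(d : ℝ) / 2) * Real.exp (-(1/(2*r)) * ‖x‖ ^ 2) := by
    funext x; unfold heatKernel; congr 2; ring
  rw [heq]
  refine h2.congr_fderiv ?_
  ext v
  simp [heatKernel, heq, two_smul]
  ring

/-- First directional derivative of the heat kernel in direction `eᵢ`. -/
noncomputable def hkD1 (d : ℕ) (r : ℝ) (i : Fin d) (w : EuclideanSpace ℝ (Fin d)) : ℝ :=
  heatKernel d r w * (-(1/r) * innerSL ℝ (EuclideanSpace.single i (1:ℝ)) w)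

/-- Second pure directional derivative of the heat kernel in direction `eᵢ`. -/
noncomputable def hkD2 (d : ℕ) (r : ℝ) (i : Fin d) (w : EuclideanSpace ℝ (Fin d)) : ℝ :=
  heatKernel d r w * ((1/r)^2 * (innerSL ℝ (EuclideanSpace.single i (1:ℝ)) w)^2 - 1/r)

lemma fderiv_hk_eq (d : ℕ) (r : ℝ) (i : Fin d) :
    (fun w => fderiv ℝ (heatKernel d r) w (EuclideanSpace.single i (1:ℝ))) = hkD1 d r i := by
  funext w
  rw [(hk_hasFDerivAt d r w).fderiv]
  simp [hkD1, real_inner_comm]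
  ring

lemma hkD1_hasFDerivAt (d : ℕ) (r : ℝ) (i : Fin d) (w : EuclideanSpace ℝ (Fin d)) :
    HasFDerivAt (hkD1 d r i)
      ((hkD1 d r i w * (-(1/r))) • (innerSL ℝ w)
        + (heatKernel d r w * (-(1/r))) • (innerSL ℝ (EuclideanSpace.single i (1:ℝ)))) w := by
  have h := (hk_hasFDerivAt d r w).mul
    (((innerSL ℝ (EuclideanSpace.single i (1:ℝ))).hasFDerivAt (x := w)).const_mul (-(1/r)))
  refine h.congr_fderiv ?_
  ext v
  simp [hkD1]
  ring

lemma hkD2_hasFDerivAt (d : ℕ) (r : ℝ) (i : Fin d) (w : EuclideanSpace ℝ (Fin d)) :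
    HasFDerivAt (hkD2 d r i)
      ((hkD2 d r i w * (-(1/r))) • (innerSL ℝ w)
        + (heatKernel d r w * (2*(1/r)^2 * innerSL ℝ (EuclideanSpace.single i (1:ℝ)) w)) •
            (innerSL ℝ (EuclideanSpace.single i (1:ℝ)))) w := by
  have hq := (innerSL ℝ (EuclideanSpace.single i (1:ℝ))).hasFDerivAt (x := w)
  have h := (hk_hasFDerivAt d r w).mul (((hq.mul hq).const_mul ((1/r)^2)).sub_const (1/r))
  have heq : hkD2 d r i = fun y => heatKernel d r y *
      ((1/r)^2 * (innerSL ℝ (EuclideanSpace.single i (1:ℝ)) y *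
        innerSL ℝ (EuclideanSpace.single i (1:ℝ)) y) - 1/r) := by
    funext y; unfold hkD2; ring
  rw [heq]
  refine h.congr_fderiv ?_
  ext v
  simp [hkD2, heq]
  ring

lemma L1_apply (d : ℕ) (r : ℝ) (i : Fin d) (w : EuclideanSpace ℝ (Fin d)) :
    ((hkD1 d r i w * (-(1/r))) • (innerSL ℝ w)
        + (heatKernel d r w * (-(1/r))) • (innerSL ℝ (EuclideanSpace.single i (1:ℝ))))
      (EuclideanSpace.single i (1:ℝ)) = hkD2 d r i w := by
  simp [hkD1, hkD2, real_inner_comm w]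
  ring

lemma hk_pos (d : ℕ) (r : ℝ) (hr : 0 < r) (w : EuclideanSpace ℝ (Fin d)) :
    0 < heatKernel d r w := by
  unfold heatKernel
  have : 0 < 2 * Real.pi * r := by positivity
  positivity

lemma L2_norm_le (d : ℕ) (r : ℝ) (hr : 0 < r) (i : Fin d) (w : EuclideanSpace ℝ (Fin d)) :
    ‖((hkD2 d r i w * (-(1/r))) • (innerSL ℝ w)
        + (heatKernel d r w * (2*(1/r)^2 * innerSL ℝ (EuclideanSpace.single i (1:ℝ)) w)) •
            (innerSL ℝ (EuclideanSpace.single i (1:ℝ))))‖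
      ≤ heatKernel d r w * (3*‖w‖/r^2 + ‖w‖^3/r^3) := by
  have hH := (hk_pos d r hr w).le
  apply ContinuousLinearMap.opNorm_le_bound _ (by positivity)
  intro v
  simp only [ContinuousLinearMap.add_apply, ContinuousLinearMap.coe_smul', Pi.smul_apply,
    innerSL_apply_apply, smul_eq_mul, Real.norm_eq_abs]
  have hei : ‖(EuclideanSpace.single i (1:ℝ))‖ = 1 := by simp [EuclideanSpace.norm_single]
  have hA : |(inner ℝ w v : ℝ)| ≤ ‖w‖ * ‖v‖ := abs_real_inner_le_norm w v
  have hB : |(inner ℝ (EuclideanSpace.single i (1:ℝ)) w : ℝ)| ≤ ‖w‖ := by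
    have := abs_real_inner_le_norm (EuclideanSpace.single i (1:ℝ)) w
    rwa [hei, one_mul] at this
  have hC : |(inner ℝ (EuclideanSpace.single i (1:ℝ)) v : ℝ)| ≤ ‖v‖ := by
    have := abs_real_inner_le_norm (EuclideanSpace.single i (1:ℝ)) v
    rwa [hei, one_mul] at this
  have hr1 : 0 ≤ 1/r := by positivity
  have hB2 : (inner ℝ (EuclideanSpace.single i (1:ℝ)) w : ℝ)^2 ≤ ‖w‖^2 := by
    nlinarith [abs_nonneg (inner ℝ (EuclideanSpace.single i (1:ℝ)) w : ℝ), sq_abs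
      (inner ℝ (EuclideanSpace.single i (1:ℝ)) w : ℝ)]
  have hD2 : |hkD2 d r i w| ≤ heatKernel d r w * ((1/r)^2 * ‖w‖^2 + 1/r) := by
    unfold hkD2
    rw [abs_mul, abs_of_nonneg hH]
    apply mul_le_mul_of_nonneg_left _ hH
    calc |(1/r)^2 * (innerSL ℝ (EuclideanSpace.single i (1:ℝ)) w)^2 - 1/r|
        ≤ |(1/r)^2 * (innerSL ℝ (EuclideanSpace.single i (1:ℝ)) w)^2| + |1/r| := abs_sub _ _
      _ ≤ (1/r)^2 * ‖w‖^2 + 1/r := by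
          rw [abs_mul, abs_of_nonneg (by positivity : (0:ℝ) ≤ (1/r)^2), abs_of_nonneg hr1,
            abs_of_nonneg (sq_nonneg _)]
          simp only [innerSL_apply_apply]
          gcongr
  calc |hkD2 d r i w * -(1/r) * (inner ℝ w v : ℝ)
        + heatKernel d r w * (2*(1/r)^2 * (inner ℝ (EuclideanSpace.single i (1:ℝ)) w : ℝ)) *
          (inner ℝ (EuclideanSpace.single i (1:ℝ)) v : ℝ)|
      ≤ |hkD2 d r i w * -(1/r) * (inner ℝ w v : ℝ)|
        + |heatKernel d r w * (2*(1/r)^2 * (inner ℝ (EuclideanSpace.single i (1:ℝ)) w : ℝ)) *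
          (inner ℝ (EuclideanSpace.single i (1:ℝ)) v : ℝ)| := abs_add_le _ _
    _ ≤ (heatKernel d r w * ((1/r)^2 * ‖w‖^2 + 1/r)) * ((1/r) * (‖w‖ * ‖v‖))
        + heatKernel d r w * (2*(1/r)^2 * ‖w‖) * ‖v‖ := by
        apply add_le_add
        · rw [abs_mul, abs_mul, abs_neg, abs_of_nonneg hr1]
          have h1 : |hkD2 d r i w| * (1/r) ≤ heatKernel d r w * ((1/r)^2 * ‖w‖^2 + 1/r) * (1/r) :=
            mul_le_mul_of_nonneg_right hD2 hr1
          calc |hkD2 d r i w| * (1/r) * |(inner ℝ w v : ℝ)|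
              ≤ heatKernel d r w * ((1/r)^2 * ‖w‖^2 + 1/r) * (1/r) * (‖w‖ * ‖v‖) := by
                apply mul_le_mul h1 hA (abs_nonneg _)
                positivity
            _ = heatKernel d r w * ((1/r)^2 * ‖w‖^2 + 1/r) * ((1/r) * (‖w‖ * ‖v‖)) := by ring
        · have habs : |heatKernel d r w * (2*(1/r)^2 * (inner ℝ (EuclideanSpace.single i (1:ℝ)) w : ℝ)) *
              (inner ℝ (EuclideanSpace.single i (1:ℝ)) v : ℝ)|
              = heatKernel d r w * (2*(1/r)^2 * |(inner ℝ (EuclideanSpace.single i (1:ℝ)) w : ℝ)|) *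
                |(inner ℝ (EuclideanSpace.single i (1:ℝ)) v : ℝ)| := by
            rw [abs_mul, abs_mul, abs_mul, abs_of_nonneg hH,
              abs_of_nonneg (by positivity : (0:ℝ) ≤ 2*(1/r)^2)]
          rw [habs]
          apply mul_le_mul _ hC (abs_nonneg _) (by positivity)
          apply mul_le_mul_of_nonneg_left _ hH
          exact mul_le_mul_of_nonneg_left hB (by positivity)
    _ = heatKernel d r w * (3*‖w‖/r^2 + ‖w‖^3/r^3) * ‖v‖ := by
        have hrne : r ≠ 0 := hr.ne'
        field_simp
        ring

lemma key1 (r s : ℝ) (hr : 0 < r) :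
    Real.exp (-s^2/(4*r)) * (3*s/r^2 + s^3/r^3) ≤ 128 * r ^ (-(3:ℝ)/2) := by
  set u := Real.sqrt r with hu
  have hu0 : 0 < u := Real.sqrt_pos.mpr hr
  have hur : u^2 = r := Real.sq_sqrt hr.le
  have hrpow : r ^ (-(3:ℝ)/2) = 1 / u^3 := by
    rw [show (-(3:ℝ)/2) = (1/2 : ℝ) * (-3 : ℝ) by norm_num, Real.rpow_mul hr.le,
      ← Real.sqrt_eq_rpow, ← hu, show (-3 : ℝ) = -(3:ℕ) by norm_num, Real.rpow_neg hu0.le,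
      Real.rpow_natCast]
    rw [one_div]
  have hexp : (1 + s^2/(8*r))^2 ≤ Real.exp (s^2/(4*r)) := by
    have h1 : s^2/(8*r) + 1 ≤ Real.exp (s^2/(8*r)) := Real.add_one_le_exp _
    have h2 : (0:ℝ) ≤ s^2/(8*r) + 1 := by positivity
    calc (1 + s^2/(8*r))^2 ≤ (Real.exp (s^2/(8*r)))^2 := by
          rw [show (1 + s^2/(8*r)) = s^2/(8*r) + 1 by ring]
          exact pow_le_pow_left₀ h2 h1 2
      _ = Real.exp (s^2/(4*r)) := by rw [sq, ← Real.exp_add]; congr 1; field_simp; ring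
  have hpoly : 3*s/r^2 + s^3/r^3 ≤ 128 / u^3 * (1 + s^2/(8*r))^2 := by
    rw [← hur]
    rw [div_add_div _ _ (by positivity) (by positivity), div_le_iff₀ (by positivity)]
    have key : 3*s*u^3 + s^3*u ≤ 128*u^4 + 32*u^2*s^2 + 2*s^4 := by
      nlinarith [sq_nonneg (s - u), sq_nonneg (s*u - u^2), sq_nonneg (s^2 - s*u),
        sq_nonneg (s^2 - u^2), pow_pos hu0 2, sq_nonneg s, sq_nonneg u]
    have expand : 128 / u^3 * (1 + s^2/(8*(u^2)))^2 * ((u^2)^2 * (u^2)^3)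
        = (128*u^4 + 32*u^2*s^2 + 2*s^4) * u^3 := by
      field_simp
      ring
    rw [expand]
    calc 3*s*(u^2)^3 + (u^2)^2*s^3 = (3*s*u^3 + s^3*u) * u^3 := by ring
      _ ≤ (128*u^4 + 32*u^2*s^2 + 2*s^4) * u^3 := by
          apply mul_le_mul_of_nonneg_right key (by positivity)
  calc Real.exp (-s^2/(4*r)) * (3*s/r^2 + s^3/r^3)
      ≤ Real.exp (-s^2/(4*r)) * (128 / u^3 * (1 + s^2/(8*r))^2) := by
        apply mul_le_mul_of_nonneg_left hpoly (Real.exp_nonneg _)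
    _ ≤ Real.exp (-s^2/(4*r)) * (128 / u^3 * Real.exp (s^2/(4*r))) := by
        apply mul_le_mul_of_nonneg_left _ (Real.exp_nonneg _)
        apply mul_le_mul_of_nonneg_left hexp (by positivity)
    _ = 128 / u^3 * (Real.exp (-s^2/(4*r)) * Real.exp (s^2/(4*r))) := by ring
    _ = 128 * r ^ (-(3:ℝ)/2) := by
        rw [← Real.exp_add, hrpow]; ring_nf; rw [Real.exp_zero]; ring

lemma keyM (d : ℕ) (r : ℝ) (hr : 0 < r) (a w : EuclideanSpace ℝ (Fin d))
    (ha : ‖a‖ ≤ 2 * ‖w‖) :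
    heatKernel d r w * (3*‖w‖/r^2 + ‖w‖^3/r^3)
      ≤ 128 * r ^ (-((d:ℝ)+3)/2) * Real.exp (-‖a‖^2/(16*r)) := by
  have hkey1 : Real.exp (-‖w‖^2/(4*r)) * (3*‖w‖/r^2 + ‖w‖^3/r^3) ≤ 128 * r ^ (-(3:ℝ)/2) :=
    key1 r ‖w‖ hr
  have h2pi : (0:ℝ) ≤ 2 * Real.pi := by positivity
  have h1 : (2 * Real.pi * r) ^ (-(d:ℝ)/2) ≤ r ^ (-(d:ℝ)/2) := by
    rw [Real.mul_rpow h2pi hr.le]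
    have hle1 : (2 * Real.pi) ^ (-(d:ℝ)/2) ≤ 1 := by
      apply Real.rpow_le_one_of_one_le_of_nonpos
      · nlinarith [Real.pi_gt_three]
      · have : (0:ℝ) ≤ (d:ℝ) := Nat.cast_nonneg d
        linarith
    calc (2 * Real.pi) ^ (-(d:ℝ)/2) * r ^ (-(d:ℝ)/2) ≤ 1 * r ^ (-(d:ℝ)/2) := by
          apply mul_le_mul_of_nonneg_right hle1 (Real.rpow_nonneg hr.le _)
      _ = r ^ (-(d:ℝ)/2) := one_mul _
  have h2 : Real.exp (-‖w‖^2/(2*r)) = Real.exp (-‖w‖^2/(4*r)) * Real.exp (-‖w‖^2/(4*r)) := by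
    rw [← Real.exp_add]; congr 1; field_simp; ring
  have h4 : Real.exp (-‖w‖^2/(4*r)) ≤ Real.exp (-‖a‖^2/(16*r)) := by
    apply Real.exp_le_exp.mpr
    rw [div_le_div_iff₀ (by positivity) (by positivity)]
    nlinarith [norm_nonneg a, norm_nonneg w, hr,
      mul_le_mul ha ha (norm_nonneg a) (by positivity : (0:ℝ) ≤ 2*‖w‖)]
  have h5 : r ^ (-(d:ℝ)/2) * r ^ (-(3:ℝ)/2) = r ^ (-((d:ℝ)+3)/2) := by
    rw [← Real.rpow_add hr]; congr 1; ring
  calc heatKernel d r w * (3*‖w‖/r^2 + ‖w‖^3/r^3)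
      = (2 * Real.pi * r) ^ (-(d:ℝ)/2) *
          ((Real.exp (-‖w‖^2/(4*r)) * (3*‖w‖/r^2 + ‖w‖^3/r^3)) * Real.exp (-‖w‖^2/(4*r))) := by
        unfold heatKernel; rw [h2]; ring
    _ ≤ (2 * Real.pi * r) ^ (-(d:ℝ)/2) * ((128 * r ^ (-(3:ℝ)/2)) * Real.exp (-‖a‖^2/(16*r))) := by
        apply mul_le_mul_of_nonneg_left _ (Real.rpow_nonneg (by positivity) _)
        apply mul_le_mul hkey1 h4 (Real.exp_nonneg _)
        positivity
    _ ≤ r ^ (-(d:ℝ)/2) * ((128 * r ^ (-(3:ℝ)/2)) * Real.exp (-‖a‖^2/(16*r))) := by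
        apply mul_le_mul_of_nonneg_right h1 (by positivity)
    _ = 128 * r ^ (-((d:ℝ)+3)/2) * Real.exp (-‖a‖^2/(16*r)) := by
        rw [← h5]; ring

end Aux

/-- Difference estimate for the pure second partial derivatives of the heat kernel:
if `|x-z| > 2|x-y|` then
`|∂²_{x_i} K(r,x−z) − ∂²_{x_i} K(r,y−z)| ≤ C |x−y| r^{-(d+3)/2} e^{-|x−z|²/(16r)}`. -/
theorem stmt_8 (d : ℕ) (hd : 1 ≤ d) :
    ∃ C : ℝ, 0 < C ∧
      ∀ r : ℝ, 0 < r → ∀ i : Fin d, ∀ x y z : EuclideanSpace ℝ (Fin d),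
        2 * ‖x - y‖ < ‖x - z‖ →
        |fderiv ℝ (fun w => fderiv ℝ (heatKernel d r) w (EuclideanSpace.single i 1))
            (x - z) (EuclideanSpace.single i 1)
          - fderiv ℝ (fun w => fderiv ℝ (heatKernel d r) w (EuclideanSpace.single i 1))
            (y - z) (EuclideanSpace.single i 1)|
        ≤ C * ‖x - y‖ * r ^ (-((d : ℝ) + 3) / 2) * Real.exp (-‖x - z‖ ^ 2 / (16 * r)) := by
  refine ⟨128, by norm_num, ?_⟩
  intro r hr i x y z hxyz
  set M : ℝ := 128 * r ^ (-((d:ℝ)+3)/2) * Real.exp (-‖x - z‖^2/(16*r)) with hM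
  -- membership facts
  have hmemb : y - z ∈ Metric.closedBall (x - z) ‖x - y‖ := by
    rw [Metric.mem_closedBall, dist_eq_norm]
    have : (y - z) - (x - z) = y - x := by abel
    rw [this, norm_sub_rev]
  have hmema : x - z ∈ Metric.closedBall (x - z) ‖x - y‖ :=
    Metric.mem_closedBall_self (norm_nonneg _)
  -- bound on the derivative of hkD2 on the ball
  have hbound : ∀ w ∈ Metric.closedBall (x - z) ‖x - y‖,
      ‖((hkD2 d r i w * (-(1/r))) • (innerSL ℝ w)
        + (heatKernel d r w * (2*(1/r)^2 * innerSL ℝ (EuclideanSpace.single i (1:ℝ)) w)) •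
            (innerSL ℝ (EuclideanSpace.single i (1:ℝ))))‖ ≤ M := by
    intro w hw
    have hdist : ‖(x - z) - w‖ ≤ ‖x - y‖ := by
      rw [Metric.mem_closedBall, dist_eq_norm] at hw
      rw [norm_sub_rev]; exact hw
    have ha : ‖x - z‖ ≤ 2 * ‖w‖ := by
      have h1 : ‖x - z‖ - ‖w‖ ≤ ‖(x - z) - w‖ := norm_sub_norm_le _ _
      linarith
    exact (L2_norm_le d r hr i w).trans (keyM d r hr (x - z) w ha)
  -- mean value inequality
  have hmvt := (convex_closedBall (x - z) ‖x - y‖).norm_image_sub_le_of_norm_hasFDerivWithin_le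
    (fun w _ => (hkD2_hasFDerivAt d r i w).hasFDerivWithinAt) hbound hmema hmemb
  -- rewrite the goal in terms of hkD2
  rw [fderiv_hk_eq d r i, (hkD1_hasFDerivAt d r i (x - z)).fderiv,
    (hkD1_hasFDerivAt d r i (y - z)).fderiv, L1_apply, L1_apply]
  have hnorm : ‖(y - z) - (x - z)‖ = ‖x - y‖ := by
    have : (y - z) - (x - z) = y - x := by abel
    rw [this, norm_sub_rev]
  rw [hnorm] at hmvt
  have habs : |hkD2 d r i (x - z) - hkD2 d r i (y - z)| ≤ M * ‖x - y‖ := by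
    rw [abs_sub_comm]
    exact hmvt
  calc |hkD2 d r i (x - z) - hkD2 d r i (y - z)| ≤ M * ‖x - y‖ := habs
    _ = 128 * ‖x - y‖ * r ^ (-((d:ℝ)+3)/2) * Real.exp (-‖x - z‖^2/(16*r)) := by
        rw [hM]; ring
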